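/- arXiv:0710.0939 — 2 statements merged into one kernel-verified Lean document; each statement's English description precedes it below -/
import Mathlib

section
/- Let d ≥ 1 and let η ∈ X be a stabilizable sandpile configuration on ℤ^d. Then there does not exist a nonfinite legal toppling procedure for η; that is, every legal toppling procedure is finite for η. -/
open MeasureTheory Filter Topology
open scoped ENNReal NNReal

/-- Sites of the lattice `ℤ^d`. -/
abbrev Site (d : ℕ) := Fin d → ℤ

/-- Sandpile configurations: `X = ℕ^{ℤ^d}`. -/
abbrev Config (d : ℕ) := Site d → ℕ

/-- Nearest-neighbor adjacency on `ℤ^d` (`ℓ¹`-distance one). -/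
def Adjacent {d : ℕ} (x y : Site d) : Prop :=
  (∑ i, (x i - y i).natAbs) = 1

/-- Sum of the values of `f` over the `2d` nearest neighbors of `y`. -/
def nbrSum {d : ℕ} {M : Type*} [AddCommMonoid M] (f : Site d → M) (y : Site d) : M :=
  ∑ i : Fin d, (f (Function.update y i (y i + 1)) + f (Function.update y i (y i - 1)))

/-- The left limit `T(t-, x, η)` of a (monotone, `ℕ`-valued) toppling function. -/
noncomputable def leftVal {d : ℕ} (T : NNReal → Site d → Config d → ℕ)
    (t : NNReal) (x : Site d) (η : Config d) : ℕ :=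
  sSup ((fun s => T s x η) '' Set.Iio t)

/-- A toppling procedure on `ℤ^d` (Definition 2.1): a measurable map
`T : [0,∞) × ℤ^d × X → ℕ` such that (a) `T(0,x,η) = 0`; (b) `t ↦ T(t,x,η)` is
right-continuous, nondecreasing, with jumps of size at most one; (c) finitely many
jumps in every finite time interval; (d) no infinite backward chain of topplings. -/
structure TopplingProcedure (d : ℕ) where
  T : NNReal → Site d → Config d → ℕ
  measurable : ∀ x : Site d, Measurable fun p : NNReal × Config d => T p.1 x p.2
  init : ∀ (x : Site d) (η : Config d), T 0 x η = 0
  mono : ∀ (x : Site d) (η : Config d), Monotone fun t => T t x η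
  jumpLe : ∀ (x : Site d) (η : Config d) (t : NNReal), T t x η ≤ leftVal T t x η + 1
  rightCont : ∀ (x : Site d) (η : Config d) (t : NNReal),
    ∃ ε : NNReal, 0 < ε ∧ ∀ s, t ≤ s → s < t + ε → T s x η = T t x η
  finJumps : ∀ (x : Site d) (η : Config d) (b : NNReal),
    {t : NNReal | t ≤ b ∧ leftVal T t x η < T t x η}.Finite
  noBackwardChain : ∀ η : Config d, ¬ ∃ (xs : ℕ → Site d) (ts : ℕ → NNReal),
    (∀ i, Adjacent (xs (i + 1)) (xs i)) ∧ StrictAnti ts ∧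
    (∀ i, leftVal T (ts i) (xs i) η < T (ts i) (xs i) η)

namespace TopplingProcedure

variable {d : ℕ}

/-- The configuration `η_t = η − Δ T(t,·,η)` at time `t` (as a `ℤ`-valued function). -/
def configAt (P : TopplingProcedure d) (η : Config d) (t : NNReal) (y : Site d) : ℤ :=
  (η y : ℤ) + nbrSum (fun x => (P.T t x η : ℤ)) y - 2 * d * (P.T t y η : ℤ)

/-- The configuration `η_{t-}` just before time `t`. -/
noncomputable def configLeft (P : TopplingProcedure d) (η : Config d) (t : NNReal)
    (y : Site d) : ℤ :=
  (η y : ℤ) + nbrSum (fun x => (leftVal P.T t x η : ℤ)) y - 2 * d * (leftVal P.T t y η : ℤ)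

/-- Site `x` topples at time `t` if `T(t,x,η) > T(t-,x,η)`. -/
def TopplesAt (P : TopplingProcedure d) (η : Config d) (x : Site d) (t : NNReal) : Prop :=
  leftVal P.T t x η < P.T t x η

/-- A toppling procedure is legal if only unstable sites are toppled:
whenever `x` topples at time `t > 0`, `η_{t-}(x) ≥ 2d`. -/
def Legal (P : TopplingProcedure d) : Prop :=
  ∀ (η : Config d) (t : NNReal) (x : Site d), 0 < t → P.TopplesAt η x t →
    (2 * d : ℤ) ≤ P.configLeft η t x

/-- `T` is finite for `η` if `T(∞,x,η) = sup_t T(t,x,η) < ∞` for every `x`. -/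
def FiniteFor (P : TopplingProcedure d) (η : Config d) : Prop :=
  ∀ x : Site d, BddAbove (Set.range fun t => P.T t x η)

/-- `T(∞,x,η) = sup_{t ≥ 0} T(t,x,η)`. -/
noncomputable def Tinf (P : TopplingProcedure d) (η : Config d) (x : Site d) : ℕ :=
  sSup (Set.range fun t => P.T t x η)

/-- The limit configuration `η_∞ = η − Δ T(∞,·,η)` (as a `ℤ`-valued function). -/
noncomputable def finalConfig (P : TopplingProcedure d) (η : Config d) (y : Site d) : ℤ :=
  (η y : ℤ) + nbrSum (fun x => (P.Tinf η x : ℤ)) y - 2 * d * (P.Tinf η y : ℤ)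

/-- `T` is stabilizing for `η` if it is finite for `η` and the limit configuration
`η_∞` is stable, i.e. takes values in `{0, 1, …, 2d−1}`. -/
def StabilizingFor (P : TopplingProcedure d) (η : Config d) : Prop :=
  P.FiniteFor η ∧ ∀ y : Site d, 0 ≤ P.finalConfig η y ∧ P.finalConfig η y ≤ 2 * d - 1

end TopplingProcedure

/-- A configuration `η` is stabilizable if there exists a stabilizing legal
toppling procedure for `η`. -/
def Stabilizable {d : ℕ} (η : Config d) : Prop :=
  ∃ P : TopplingProcedure d, P.Legal ∧ P.StabilizingFor η

/-- The shift of a configuration by a lattice vector `v`. -/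
def shiftConfig {d : ℕ} (v : Site d) (η : Config d) : Config d := fun x => η (x + v)

/-- A probability measure on `X` is translation invariant if it is invariant
under all shifts of `ℤ^d`. -/
def TransInvariant {d : ℕ} (μ : Measure (Config d)) : Prop :=
  ∀ v : Site d, Measure.map (shiftConfig v) μ = μ

/-- `μ` is a product measure: under `μ` the coordinates `(η(x))` are i.i.d. -/
def IsProductMeasure {d : ℕ} (μ : Measure (Config d)) : Prop :=
  ProbabilityTheory.iIndepFun
      (fun (x : Site d) (η : Config d) => η x) μ ∧
    ∀ x : Site d, Measure.map (fun η : Config d => η x) μ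
      = Measure.map (fun η : Config d => η (0 : Site d)) μ

/-- `x` belongs to the set `T_∞` of sites that topple during stabilization of `η`. -/
def ToppledInf {d : ℕ} (η : Config d) (x : Site d) : Prop :=
  ∃ P : TopplingProcedure d, P.Legal ∧ P.StabilizingFor η ∧ 0 < P.Tinf η x

/-- `x` belongs to `W_∞ = T_∞ ∪ {x : η_∞(x) > 0}`: `x` topples during stabilization
of `η`, or is nonempty after stabilization. -/
def InWinf {d : ℕ} (η : Config d) (x : Site d) : Prop :=
  ∃ P : TopplingProcedure d, P.Legal ∧ P.StabilizingFor η ∧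
    (0 < P.Tinf η x ∨ 0 < P.finalConfig η x)

/-- `y` lies in the cluster of `x` of the set `S`: `x` and `y` are joined by a
nearest-neighbor path inside `S`. -/
def InClusterOf {d : ℕ} (S : Site d → Prop) (x y : Site d) : Prop :=
  ∃ (k : ℕ) (f : ℕ → Site d), f 0 = x ∧ f k = y ∧ (∀ i ≤ k, S (f i)) ∧
    ∀ i < k, Adjacent (f i) (f (i + 1))


section Aux

variable {d : ℕ} (T : TopplingProcedure d) (η : Config d)

lemma leftVal_bddAbove (x : Site d) (s : NNReal) :
    BddAbove ((fun u => T.T u x η) '' Set.Iio s) := by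
  refine ⟨T.T s x η, ?_⟩
  rintro n ⟨u, hu, rfl⟩
  exact T.mono x η hu.le

lemma le_leftVal {x : Site d} {u s : NNReal} (h : u < s) :
    T.T u x η ≤ leftVal T.T s x η :=
  le_csSup (leftVal_bddAbove T η x s) ⟨u, h, rfl⟩

lemma leftVal_le {x : Site d} {s : NNReal} {n : ℕ}
    (h : ∀ u < s, T.T u x η ≤ n) : leftVal T.T s x η ≤ n := by
  refine csSup_le' ?_
  rintro m ⟨u, hu, rfl⟩
  exact h u hu

lemma exists_lt_of_leftVal_lt {x : Site d} {s : NNReal} {n : ℕ}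
    (h : n < leftVal T.T s x η) : ∃ u < s, n < T.T u x η := by
  by_contra hc
  push_neg at hc
  exact absurd (leftVal_le T η hc) (not_le.mpr h)

/-- A crossing of level `n` at site `x`: a jump at time `s` from `n` to `n+1`. -/
def CrossAt (n : ℕ) (x : Site d) (s : NNReal) : Prop :=
  0 < s ∧ leftVal T.T s x η = n ∧ T.T s x η = n + 1

lemma crossing {n : ℕ} {x : Site d} {t : NNReal} (h : n < T.T t x η) :
    ∃ s ≤ t, CrossAt T η n x s := by
  set U : Set NNReal := {u | u ≤ t ∧ n < T.T u x η} with hU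
  have hUne : U.Nonempty := ⟨t, le_rfl, h⟩
  have hUbdd : BddBelow U := OrderBot.bddBelow U
  set m := sInf U with hm
  obtain ⟨ε, hε, hεeq⟩ := T.rightCont x η m
  have hlt : sInf U < m + ε := by
    rw [← hm]; exact lt_add_of_pos_right m hε
  obtain ⟨u, hu, hum⟩ := exists_lt_of_csInf_lt hUne hlt
  have hmu : m ≤ u := csInf_le hUbdd hu
  have hTu : T.T u x η = T.T m x η := hεeq u hmu hum
  have hmU : n < T.T m x η := by rw [← hTu]; exact hu.2
  have hmt : m ≤ t := le_trans hmu hu.1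
  have hleft : leftVal T.T m x η ≤ n := by
    refine leftVal_le T η ?_
    intro v hv
    by_contra hc
    push_neg at hc
    exact absurd (csInf_le hUbdd ⟨le_trans hv.le hmt, hc⟩) (not_le.mpr hv)
  have hjump := T.jumpLe x η m
  have hTm : T.T m x η = n + 1 := by omega
  have hleft' : leftVal T.T m x η = n := by omega
  have hmpos : 0 < m := by
    by_contra hc
    push_neg at hc
    have hm0 : m = 0 := le_antisymm hc zero_le
    rw [hm0, T.init x η] at hTm
    omega
  exact ⟨m, hmt, hmpos, hleft', hTm⟩

lemma adjacent_update (x : Site d) (i : Fin d) (e : ℤ) (he : e.natAbs = 1) :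
    Adjacent (Function.update x i (x i + e)) x := by
  unfold Adjacent
  rw [Finset.sum_eq_single_of_mem i (Finset.mem_univ i)]
  · simp [Function.update_self, he]
  · intro j _ hj
    simp [Function.update_of_ne hj]

lemma step (hT : T.Legal) (P : TopplingProcedure d) (hP2 : P.StabilizingFor η)
    {x : Site d} {s : NNReal} (hc : CrossAt T η (P.Tinf η x) x s) :
    ∃ p : Site d × NNReal, Adjacent p.1 x ∧ p.2 < s ∧
      CrossAt T η (P.Tinf η p.1) p.1 p.2 := by
  obtain ⟨hs, hl, hTs⟩ := hc
  have htop : T.TopplesAt η x s := by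
    unfold TopplingProcedure.TopplesAt
    omega
  have hleg := hT η s x hs htop
  have hstab := (hP2.2 x).2
  unfold TopplingProcedure.configLeft at hleg
  unfold TopplingProcedure.finalConfig at hstab
  rw [hl] at hleg
  have hd1 : (1 : ℤ) ≤ d := by
    by_contra hdc
    push_neg at hdc
    have hd0 : d = 0 := by omega
    subst hd0
    simp [nbrSum] at hleg hstab
    omega
  have hsum : nbrSum (fun z => (P.Tinf η z : ℤ)) x
      < nbrSum (fun z => (leftVal T.T s z η : ℤ)) x := by omega
  simp only [nbrSum] at hsum
  obtain ⟨i, _, hi⟩ := Finset.exists_lt_of_sum_lt hsum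
  have key : ∃ y : Site d, Adjacent y x ∧ P.Tinf η y < leftVal T.T s y η := by
    rcases lt_or_ge ((P.Tinf η (Function.update x i (x i + 1)) : ℤ))
        ((leftVal T.T s (Function.update x i (x i + 1)) η : ℤ)) with h1 | h1
    · exact ⟨Function.update x i (x i + 1),
        adjacent_update x i 1 (by decide), by exact_mod_cast h1⟩
    · refine ⟨Function.update x i (x i - 1), ?_, ?_⟩
      · have := adjacent_update x i (-1) (by decide)
        simpa [sub_eq_add_neg] using this
      · have h2 : (P.Tinf η (Function.update x i (x i - 1)) : ℤ)
            < (leftVal T.T s (Function.update x i (x i - 1)) η : ℤ) := by omega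
        exact_mod_cast h2
  obtain ⟨y, hyadj, hy⟩ := key
  obtain ⟨u, hus, hu⟩ := exists_lt_of_leftVal_lt T η hy
  obtain ⟨m, hmu, hm⟩ := crossing T η hu
  exact ⟨(y, m), hyadj, lt_of_le_of_lt hmu hus, hm⟩

end Aux

/-- Theorem 2.8(3): for stabilizable `η` there is no nonfinite legal toppling
procedure: every legal toppling procedure is finite for `η`. -/
theorem statement2 (d : ℕ) (hd : 1 ≤ d) (η : Config d) (hη : Stabilizable η)
    (T : TopplingProcedure d) (hT : T.Legal) : T.FiniteFor η := by
  obtain ⟨P, hPleg, hPstab⟩ := hη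
  by_contra hfin
  unfold TopplingProcedure.FiniteFor at hfin
  push_neg at hfin
  obtain ⟨x₀, hx₀⟩ := hfin
  rw [not_bddAbove_iff] at hx₀
  obtain ⟨v, ⟨t₀, rfl⟩, hv⟩ := hx₀ (P.Tinf η x₀)
  obtain ⟨s₀, _, hs₀⟩ := crossing T η hv
  -- build the infinite backward chain
  let S := {p : Site d × NNReal // CrossAt T η (P.Tinf η p.1) p.1 p.2}
  let next : S → S := fun q =>
    ⟨(step T η hT P hPstab q.2).choose, (step T η hT P hPstab q.2).choose_spec.2.2⟩
  have hnext : ∀ q : S, Adjacent (next q).1.1 q.1.1 ∧ (next q).1.2 < q.1.2 :=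
    fun q => ⟨(step T η hT P hPstab q.2).choose_spec.1,
      (step T η hT P hPstab q.2).choose_spec.2.1⟩
  let f : ℕ → S := fun n => next^[n] ⟨(x₀, s₀), hs₀⟩
  have hfsucc : ∀ n, f (n + 1) = next (f n) := by
    intro n
    simp only [f, Function.iterate_succ_apply']
  refine T.noBackwardChain η ⟨fun n => (f n).1.1, fun n => (f n).1.2, ?_, ?_, ?_⟩
  · intro i
    show Adjacent ((f (i + 1)).1.1) ((f i).1.1)
    rw [hfsucc i]
    exact (hnext (f i)).1
  · refine strictAnti_nat_of_succ_lt (fun n => ?_)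
    show (f (n + 1)).1.2 < (f n).1.2
    rw [hfsucc n]
    exact (hnext (f n)).2
  · intro i
    show leftVal T.T (f i).1.2 (f i).1.1 η < T.T (f i).1.2 (f i).1.1 η
    obtain ⟨_, hl, hTv⟩ := (f i).2
    omega
end

section
/- Let d ≥ 1. Every translation invariant probability measure μ on X with density ρ = E_μ[η(0)] > 2d − 1 is not stabilizable. -/
open MeasureTheory Filter Topology
open scoped ENNReal NNReal

section Aux

open scoped ENNReal

variable {d : ℕ}

/-- Monotonicity of `nbrSum`. -/
lemma nbrSum_mono {f g : Site d → ℝ≥0∞} (h : ∀ x, f x ≤ g x) (y : Site d) :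
    nbrSum f y ≤ nbrSum g y :=
  Finset.sum_le_sum fun _ _ => add_le_add (h _) (h _)

/-- Kleene iteration towards the minimal nonnegative solution of
`η(y) + ∑_nbr u ≤ 2d·u(y) + (2d-1)`. -/
noncomputable def iterF (d : ℕ) (η : Config d) : ℕ → Site d → ℝ≥0∞
  | 0 => fun _ => 0
  | n+1 => fun y =>
      ((η y : ℝ≥0∞) + nbrSum (iterF d η n) y - ((2*d-1 : ℕ) : ℝ≥0∞)) / ((2*d : ℕ) : ℝ≥0∞)

/-- The minimal solution. -/
noncomputable def mfun (d : ℕ) (η : Config d) (y : Site d) : ℝ≥0∞ :=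
  ⨆ n, iterF d η n y

lemma iterF_mono_pt (η : Config d) :
    ∀ n y, iterF d η n y ≤ iterF d η (n+1) y
  | 0, _ => zero_le
  | n+1, y => by
      simp only [iterF]
      gcongr
      exact nbrSum_mono (fun x => iterF_mono_pt η n x) y

lemma iterF_monotone (η : Config d) (y : Site d) :
    Monotone fun n => iterF d η n y :=
  monotone_nat_of_le_succ fun n => iterF_mono_pt η n y

lemma iterF_le_of_sol {η : Config d} {u : Site d → ℝ≥0∞}
    (hu : ∀ y, (η y : ℝ≥0∞) + nbrSum u y
      ≤ ((2*d : ℕ) : ℝ≥0∞) * u y + ((2*d-1 : ℕ) : ℝ≥0∞)) :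
    ∀ n y, iterF d η n y ≤ u y
  | 0, _ => zero_le
  | n+1, y => by
      simp only [iterF]
      refine ENNReal.div_le_of_le_mul ?_
      refine tsub_le_iff_right.mpr ?_
      calc (η y : ℝ≥0∞) + nbrSum (iterF d η n) y
          ≤ (η y : ℝ≥0∞) + nbrSum u y :=
            add_le_add le_rfl (nbrSum_mono (fun x => iterF_le_of_sol hu n x) y)
        _ ≤ ((2*d : ℕ) : ℝ≥0∞) * u y + ((2*d-1 : ℕ) : ℝ≥0∞) := hu y
        _ = u y * ((2*d : ℕ) : ℝ≥0∞) + ((2*d-1 : ℕ) : ℝ≥0∞) := by rw [mul_comm]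

lemma mfun_le_of_sol {η : Config d} {u : Site d → ℝ≥0∞}
    (hu : ∀ y, (η y : ℝ≥0∞) + nbrSum u y
      ≤ ((2*d : ℕ) : ℝ≥0∞) * u y + ((2*d-1 : ℕ) : ℝ≥0∞)) (y : Site d) :
    mfun d η y ≤ u y :=
  iSup_le fun n => iterF_le_of_sol hu n y

/-- `nbrSum` commutes with the monotone supremum defining `mfun`. -/
lemma nbrSum_mfun (η : Config d) (y : Site d) :
    nbrSum (mfun d η) y = ⨆ n, nbrSum (iterF d η n) y := by
  unfold nbrSum mfun
  have h1 : ∀ i : Fin d,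
      (⨆ n, iterF d η n (Function.update y i (y i + 1))) +
        (⨆ n, iterF d η n (Function.update y i (y i - 1)))
      = ⨆ n, (iterF d η n (Function.update y i (y i + 1)) +
          iterF d η n (Function.update y i (y i - 1))) := fun i =>
    ENNReal.iSup_add_iSup_of_monotone (iterF_monotone η _) (iterF_monotone η _)
  simp only [h1]
  exact ENNReal.finsetSum_iSup_of_monotone fun i a b hab =>
    add_le_add (iterF_monotone η _ hab) (iterF_monotone η _ hab)

/-- The minimal solution is itself a solution. -/
lemma mfun_sol (hd : 1 ≤ d) (η : Config d) (y : Site d) :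
    (η y : ℝ≥0∞) + nbrSum (mfun d η) y
      ≤ ((2*d : ℕ) : ℝ≥0∞) * mfun d η y + ((2*d-1 : ℕ) : ℝ≥0∞) := by
  have hk0 : ((2*d : ℕ) : ℝ≥0∞) ≠ 0 := by
    simp only [ne_eq, Nat.cast_eq_zero]; omega
  have hktop : ((2*d : ℕ) : ℝ≥0∞) ≠ ∞ := ENNReal.natCast_ne_top _
  have key : ((η y : ℝ≥0∞) + nbrSum (mfun d η) y - ((2*d-1 : ℕ) : ℝ≥0∞))
      / ((2*d : ℕ) : ℝ≥0∞) ≤ mfun d η y := by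
    rw [nbrSum_mfun, ENNReal.add_iSup, ENNReal.iSup_sub, ENNReal.iSup_div]
    refine iSup_le fun n => ?_
    have : ((η y : ℝ≥0∞) + nbrSum (iterF d η n) y - ((2*d-1 : ℕ) : ℝ≥0∞))
        / ((2*d : ℕ) : ℝ≥0∞) = iterF d η (n+1) y := rfl
    rw [this]
    exact le_iSup (fun m => iterF d η m y) (n+1)
  have h2 := (ENNReal.div_le_iff hk0 hktop).mp key
  have h3 := tsub_le_iff_right.mp h2
  calc (η y : ℝ≥0∞) + nbrSum (mfun d η) y
      ≤ mfun d η y * ((2*d : ℕ) : ℝ≥0∞) + ((2*d-1 : ℕ) : ℝ≥0∞) := h3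
    _ = ((2*d : ℕ) : ℝ≥0∞) * mfun d η y + ((2*d-1 : ℕ) : ℝ≥0∞) := by rw [mul_comm]

/-- Measurability of the iterates. -/
lemma measurable_iterF : ∀ (n : ℕ) (y : Site d),
    Measurable fun η : Config d => iterF d η n y
  | 0, _ => measurable_const
  | n+1, y => by
      simp only [iterF]
      refine Measurable.div_const (Measurable.sub ?_ measurable_const) _
      refine (show Measurable ((fun η : Config d => (η y : ℝ≥0∞)) +
        fun η => nbrSum (iterF d η n) y) from Measurable.add ?_ ?_)
      · exact (measurable_from_top).comp (measurable_pi_apply y)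
      · unfold nbrSum
        refine Finset.measurable_sum _ fun i _ => ?_
        exact (measurable_iterF n _).add (measurable_iterF n _)

lemma measurable_mfun (y : Site d) :
    Measurable fun η : Config d => mfun d η y :=
  Measurable.iSup fun n => measurable_iterF n y

/-- Shifting commutes with `Function.update` at a neighbour. -/
lemma update_add (y v : Site d) (i : Fin d) (a : ℤ) :
    Function.update y i (y i + a) + v = Function.update (y + v) i ((y + v) i + a) := by
  funext j
  by_cases h : j = i
  · subst h; simp [Function.update_self, Pi.add_apply]; ring
  · simp [Function.update_of_ne h, Pi.add_apply]

/-- `nbrSum` and shifts. -/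
lemma nbrSum_shift {M : Type*} [AddCommMonoid M] (f : Site d → M) (v y : Site d) :
    nbrSum (fun x => f (x + v)) y = nbrSum f (y + v) := by
  unfold nbrSum
  refine Finset.sum_congr rfl fun i _ => ?_
  have h1 : Function.update y i (y i + 1) + v
      = Function.update (y + v) i ((y + v) i + 1) := update_add y v i 1
  have h2 : Function.update y i (y i - 1) + v
      = Function.update (y + v) i ((y + v) i - 1) := by
    have := update_add y v i (-1)
    simpa [sub_eq_add_neg] using this
  show f (Function.update y i (y i + 1) + v) + f (Function.update y i (y i - 1) + v) = _
  rw [h1, h2]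

lemma iterF_shift (η : Config d) (v : Site d) :
    ∀ (n : ℕ) (y : Site d), iterF d (shiftConfig v η) n y = iterF d η n (y + v)
  | 0, _ => rfl
  | n+1, y => by
      simp only [iterF]
      have hfun : iterF d (shiftConfig v η) n
          = fun x => iterF d η n (x + v) := funext fun x => iterF_shift η v n x
      rw [hfun, nbrSum_shift]
      rfl

lemma mfun_shift (η : Config d) (v y : Site d) :
    mfun d (shiftConfig v η) y = mfun d η (y + v) := by
  unfold mfun
  exact iSup_congr fun n => iterF_shift η v n y

/-- Any stabilizable configuration admits a natural-number solution. -/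
lemma sol_of_stabilizable (hd : 1 ≤ d) {η : Config d} (h : Stabilizable η) :
    ∃ u : Site d → ℕ, ∀ y, (η y : ℝ≥0∞) + nbrSum (fun x => (u x : ℝ≥0∞)) y
      ≤ ((2*d : ℕ) : ℝ≥0∞) * (u y : ℝ≥0∞) + ((2*d-1 : ℕ) : ℝ≥0∞) := by
  obtain ⟨P, -, -, hstab⟩ := h
  refine ⟨fun y => P.Tinf η y, fun y => ?_⟩
  have hZ := (hstab y).2
  unfold TopplingProcedure.finalConfig at hZ
  -- hZ : (η y : ℤ) + nbrSum (fun x => (Tinf x : ℤ)) y - 2d * Tinf y ≤ 2d - 1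
  have hcast : nbrSum (fun x => ((P.Tinf η x : ℕ) : ℤ)) y
      = ((nbrSum (fun x => P.Tinf η x) y : ℕ) : ℤ) := by
    unfold nbrSum; push_cast; ring
  rw [hcast] at hZ
  have hN : η y + nbrSum (fun x => P.Tinf η x) y
      ≤ 2*d * P.Tinf η y + (2*d-1) := by
    have h1 : (1:ℕ) ≤ 2*d := by omega
    zify [h1]
    rw [← hcast]
    linarith [hZ]
  have hE : ((η y + nbrSum (fun x => P.Tinf η x) y : ℕ) : ℝ≥0∞)
      ≤ ((2*d * P.Tinf η y + (2*d-1) : ℕ) : ℝ≥0∞) := Nat.cast_le.mpr hN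
  have hc1 : ((η y + nbrSum (fun x => P.Tinf η x) y : ℕ) : ℝ≥0∞)
      = (η y : ℝ≥0∞) + nbrSum (fun x => ((P.Tinf η x : ℕ) : ℝ≥0∞)) y := by
    unfold nbrSum; push_cast; ring
  have hc2 : ((2*d * P.Tinf η y + (2*d-1) : ℕ) : ℝ≥0∞)
      = ((2*d : ℕ) : ℝ≥0∞) * ((P.Tinf η y : ℕ) : ℝ≥0∞) + ((2*d-1 : ℕ) : ℝ≥0∞) := by
    push_cast; ring
  rw [hc1, hc2] at hE
  exact hE

end Aux

/-- Theorem 3.1 (upper bound): every translation invariant probability measure with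
density `ρ = E_μ[η(0)] > 2d − 1` is not stabilizable. -/
theorem statement7 (d : ℕ) (hd : 1 ≤ d) (μ : Measure (Config d))
    [IsProbabilityMeasure μ] (hinv : TransInvariant μ)
    (hmean : ((2 * d - 1 : ℕ) : ℝ≥0∞) < ∫⁻ η, (η (0 : Site d) : ℝ≥0∞) ∂μ) :
    ¬ ∀ᵐ η ∂μ, Stabilizable η := by
  classical
  intro H
  set c : ℝ≥0∞ := ((2*d-1 : ℕ) : ℝ≥0∞) with hc
  set k : ℝ≥0∞ := ((2*d : ℕ) : ℝ≥0∞) with hk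
  have hktop : k ≠ ∞ := ENNReal.natCast_ne_top _
  -- measurability of shifts
  have hshift_meas : ∀ v : Site d, Measurable (shiftConfig v : Config d → Config d) :=
    fun v => measurable_pi_lambda _ fun x => measurable_pi_apply (x + v)
  -- translation invariance of truncated integrals
  have hint : ∀ (N : ℕ) (z : Site d),
      ∫⁻ η, min (mfun d η z) N ∂μ = ∫⁻ η, min (mfun d η 0) N ∂μ := by
    intro N z
    have hmeas : Measurable fun η : Config d => min (mfun d η 0) (N : ℝ≥0∞) :=
      (measurable_mfun 0).min measurable_const
    calc ∫⁻ η, min (mfun d η z) N ∂μ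
        = ∫⁻ η, min (mfun d (shiftConfig z η) 0) N ∂μ := by
          refine lintegral_congr fun η => ?_
          rw [mfun_shift, zero_add]
      _ = ∫⁻ η, min (mfun d η 0) N ∂(Measure.map (shiftConfig z) μ) :=
          (lintegral_map hmeas (hshift_meas z)).symm
      _ = ∫⁻ η, min (mfun d η 0) N ∂μ := by rw [hinv z]
  -- the key truncated bound
  have key : ∀ N : ℕ,
      (∫⁻ η, (if mfun d η 0 < N then (η 0 : ℝ≥0∞) else 0) ∂μ) ≤ c := by
    intro N
    set hN : ℝ≥0∞ := ∫⁻ η, min (mfun d η 0) N ∂μ with hNdef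
    have hNle : hN ≤ N := by
      calc hN ≤ ∫⁻ _, (N : ℝ≥0∞) ∂μ := lintegral_mono fun η => min_le_right _ _
        _ = N := by simp
    have hNfin : k * hN ≠ ∞ :=
      ENNReal.mul_ne_top hktop (ne_top_of_le_ne_top (ENNReal.natCast_ne_top N) hNle)
    -- pointwise inequality
    have hpt : ∀ η : Config d,
        (if mfun d η 0 < N then (η 0 : ℝ≥0∞) else 0)
          + nbrSum (fun z => min (mfun d η z) N) 0
        ≤ k * min (mfun d η 0) N + c := by
      intro η
      by_cases hlt : mfun d η 0 < N
      · rw [if_pos hlt, min_eq_left hlt.le]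
        calc (η 0 : ℝ≥0∞) + nbrSum (fun z => min (mfun d η z) N) 0
            ≤ (η 0 : ℝ≥0∞) + nbrSum (mfun d η) 0 :=
              add_le_add le_rfl (nbrSum_mono (fun z => min_le_left _ _) 0)
          _ ≤ k * mfun d η 0 + c := mfun_sol hd η 0
      · rw [if_neg hlt, min_eq_right (not_lt.mp hlt), zero_add]
        have h1 : nbrSum (fun z => min (mfun d η z) N) 0
            ≤ ∑ _i : Fin d, ((N : ℝ≥0∞) + N) :=
          Finset.sum_le_sum fun i _ => add_le_add (min_le_right _ _) (min_le_right _ _)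
        have h2 : (∑ _i : Fin d, ((N : ℝ≥0∞) + N)) = k * N := by
          rw [Finset.sum_const, Finset.card_univ, Fintype.card_fin, hk]
          push_cast
          ring
        calc nbrSum (fun z => min (mfun d η z) N) 0 ≤ k * N := h2 ▸ h1
          _ ≤ k * N + c := le_self_add
    -- measurability of both summands
    have hmeasA : Measurable fun η : Config d =>
        (if mfun d η 0 < N then (η 0 : ℝ≥0∞) else 0) := by
      refine Measurable.ite ?_ ?_ measurable_const
      · exact measurableSet_lt (measurable_mfun 0) measurable_const
      · exact (measurable_from_top).comp (measurable_pi_apply 0)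
    have hmeasz : ∀ z : Site d,
        Measurable fun η : Config d => min (mfun d η z) (N : ℝ≥0∞) :=
      fun z => (measurable_mfun z).min measurable_const
    have hmeasB : Measurable fun η : Config d =>
        nbrSum (fun z => min (mfun d η z) (N : ℝ≥0∞)) 0 := by
      unfold nbrSum
      exact Finset.measurable_sum _ fun i _ => (hmeasz _).add (hmeasz _)
    -- integrate the neighbour sum
    have hintB : ∫⁻ η, nbrSum (fun z => min (mfun d η z) N) 0 ∂μ = k * hN := by
      have : ∫⁻ η, nbrSum (fun z => min (mfun d η z) N) 0 ∂μ
          = ∑ _i : Fin d, (hN + hN) := by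
        unfold nbrSum
        rw [lintegral_finset_sum (f := fun i η => min (mfun d η (Function.update (0 : Site d) i
            ((0 : Site d) i + 1))) (N : ℝ≥0∞) + min (mfun d η (Function.update (0 : Site d) i
            ((0 : Site d) i - 1))) (N : ℝ≥0∞)) _
          fun i _ => by
            have h1 := hmeasz (Function.update (0 : Site d) i ((0 : Site d) i + 1))
            have h2 := hmeasz (Function.update (0 : Site d) i ((0 : Site d) i - 1))
            exact Measurable.add h1 h2]
        refine Finset.sum_congr rfl fun i _ => ?_
        rw [lintegral_add_left (hmeasz _),
          hint N (Function.update (0 : Site d) i ((0 : Site d) i + 1)),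
          hint N (Function.update (0 : Site d) i ((0 : Site d) i - 1))]
      rw [this, Finset.sum_const, Finset.card_univ, Fintype.card_fin, hk,
        nsmul_eq_mul]
      push_cast
      ring
    -- integrate the pointwise bound
    have hineq : (∫⁻ η, (if mfun d η 0 < N then (η 0 : ℝ≥0∞) else 0) ∂μ) + k * hN
        ≤ k * hN + c := by
      calc (∫⁻ η, (if mfun d η 0 < N then (η 0 : ℝ≥0∞) else 0) ∂μ) + k * hN
          = ∫⁻ η, ((if mfun d η 0 < N then (η 0 : ℝ≥0∞) else 0)
              + nbrSum (fun z => min (mfun d η z) N) 0) ∂μ := by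
            rw [lintegral_add_left hmeasA, hintB]
        _ ≤ ∫⁻ η, (k * min (mfun d η 0) N + c) ∂μ := lintegral_mono hpt
        _ = k * hN + c := by
            rw [lintegral_add_right _ measurable_const, lintegral_const_mul _
              ((measurable_mfun 0).min measurable_const), lintegral_const,
              measure_univ, mul_one]
    exact ENNReal.le_of_add_le_add_right hNfin (hineq.trans_eq (add_comm _ _))
  -- monotone convergence in N
  have hmono : Monotone fun (N : ℕ) (η : Config d) =>
      (if mfun d η 0 < N then (η 0 : ℝ≥0∞) else 0) := by
    intro N M hNM η
    dsimp only
    by_cases hlt : mfun d η 0 < N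
    · rw [if_pos hlt, if_pos (lt_of_lt_of_le hlt (by exact_mod_cast Nat.cast_le.mpr hNM))]
    · rw [if_neg hlt]
      exact zero_le
  have hmeasN : ∀ N : ℕ, Measurable fun η : Config d =>
      (if mfun d η 0 < N then (η 0 : ℝ≥0∞) else 0) := by
    intro N
    refine Measurable.ite ?_ ?_ measurable_const
    · exact measurableSet_lt (measurable_mfun 0) measurable_const
    · exact (measurable_from_top).comp (measurable_pi_apply 0)
  have hae : ∀ᵐ η ∂μ,
      (⨆ N : ℕ, (if mfun d η 0 < N then (η 0 : ℝ≥0∞) else 0)) = (η 0 : ℝ≥0∞) := by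
    filter_upwards [H] with η hη
    obtain ⟨u, hu⟩ := sol_of_stabilizable hd hη
    have hfin : mfun d η 0 ≠ ∞ := by
      refine ne_top_of_le_ne_top (ENNReal.natCast_ne_top (u 0)) ?_
      exact mfun_le_of_sol hu 0
    obtain ⟨N, hN⟩ := ENNReal.exists_nat_gt hfin
    refine le_antisymm (iSup_le fun M => ?_) ?_
    · by_cases hlt : mfun d η 0 < M
      · rw [if_pos hlt]
      · rw [if_neg hlt]; exact zero_le
    · refine le_iSup_of_le N ?_
      rw [if_pos hN]
  have hfinal : (∫⁻ η, (η 0 : ℝ≥0∞) ∂μ) ≤ c := by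
    have h1 : (∫⁻ η, (η 0 : ℝ≥0∞) ∂μ)
        = ∫⁻ η, (⨆ N : ℕ, (if mfun d η 0 < N then (η 0 : ℝ≥0∞) else 0)) ∂μ :=
      (lintegral_congr_ae hae).symm
    rw [h1, lintegral_iSup hmeasN hmono]
    exact iSup_le key
  exact absurd hmean (not_lt.mpr hfinal)
end
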